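/- arXiv:1704.06072 — 4 statements merged into one kernel-verified Lean document; each statement's English description precedes it below -/
import Mathlib

section
/- For every dimension d ≥ 1 there exists a constant c₁ = c₁(d) > 0 with the following property: for every probability mass function q on ℤ^d (q : ℤ^d → [0,1] with ∑_{x∈ℤ^d} q(x) = 1) whose first moment M := ∑_{x∈ℤ^d} |x| q(x) is finite and satisfies M > 1, the entropy H := ∑_{x∈ℤ^d} q(x) log(1/q(x)) (a sum of nonnegative terms, with the convention 0·log(1/0) = 0) is finite and satisfies M ≥ c₁ e^{H/d}. -/
set_option maxHeartbeats 1000000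

open MeasureTheory Filter Finset

noncomputable section

/-- Product of a summable nonnegative function over coordinates is summable on the pi type,
with tsum equal to the power. -/
lemma pi_prod_summable {f : ℤ → ℝ} (hf0 : ∀ n, 0 ≤ f n) (hf : Summable f) (n : ℕ) :
    Summable (fun x : Fin n → ℤ => ∏ i, f (x i)) ∧
      ∑' x : Fin n → ℤ, ∏ i, f (x i) = (∑' m, f m) ^ n := by
  induction n with
  | zero =>
      constructor
      · simpa using summable_of_finite_support (Set.toFinite _)
      · simp [tsum_eq_single (default : Fin 0 → ℤ) (fun b hb => absurd (Subsingleton.elim b default) hb)]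
  | succ n ih =>
      obtain ⟨ihs, ihe⟩ := ih
      set e := Fin.consEquiv (fun _ : Fin (n+1) => ℤ)
      have key : ∀ p : ℤ × (Fin n → ℤ),
          (∏ i, f (e p i)) = f p.1 * ∏ i, f (p.2 i) := by
        intro p
        rw [Fin.prod_univ_succ]
        simp [e, Fin.consEquiv]
      have h1 : (0 : ℤ → ℝ) ≤ f := hf0
      have h2 : (0 : (Fin n → ℤ) → ℝ) ≤ fun x => ∏ i, f (x i) :=
        fun x => Finset.prod_nonneg fun i _ => hf0 _
      have hs : Summable (fun p : ℤ × (Fin n → ℤ) => f p.1 * ∏ i, f (p.2 i)) :=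
        Summable.mul_of_nonneg (f := f) (g := fun x : Fin n → ℤ => ∏ i, f (x i)) hf ihs h1 h2
      have hsumm : Summable (fun x : Fin (n+1) → ℤ => ∏ i, f (x i)) :=
        e.summable_iff.mp (hs.congr fun p => (key p).symm)
      refine ⟨hsumm, ?_⟩
      have h1 : ∑' x : Fin (n+1) → ℤ, ∏ i, f (x i)
          = ∑' p : ℤ × (Fin n → ℤ), f p.1 * ∏ i, f (p.2 i) := by
        rw [← e.tsum_eq]
        exact tsum_congr key
      rw [h1, ← Summable.tsum_mul_tsum hf ihs hs, ihe]
      ring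

/-- **Lemma 1 (entropy inequality, after Carleson/Nash).**
For every dimension `d ≥ 1` there is a constant `c₁ = c₁(d) > 0` such that for every
probability mass function `q` on `ℤ^d` whose first moment `M = ∑ |x| q x` (Euclidean norm)
is finite and exceeds `1`, the entropy `H = ∑ q x * log (1 / q x)` is finite and
`M ≥ c₁ * exp (H / d)`. -/
theorem entropy_inequality (d : ℕ) (hd : 1 ≤ d) :
    ∃ c₁ : ℝ, 0 < c₁ ∧
      ∀ q : (Fin d → ℤ) → ℝ,
        (∀ x, 0 ≤ q x) → (∀ x, q x ≤ 1) → HasSum q 1 →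
        Summable (fun x => Real.sqrt (∑ i, (x i : ℝ) ^ 2) * q x) →
        1 < ∑' x, Real.sqrt (∑ i, (x i : ℝ) ^ 2) * q x →
        Summable (fun x => q x * Real.log (1 / q x)) ∧
          c₁ * Real.exp ((∑' x, q x * Real.log (1 / q x)) / d) ≤
            ∑' x, Real.sqrt (∑ i, (x i : ℝ) ^ 2) * q x := by
  have hd0 : (0:ℝ) < d := by exact_mod_cast hd
  have hd1 : (1:ℝ) ≤ d := by exact_mod_cast hd
  refine ⟨(4 * d * Real.exp 1)⁻¹, by positivity, ?_⟩
  intro q hq0 hq1 hqsum hmom hM1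
  set nrm : (Fin d → ℤ) → ℝ := fun x => Real.sqrt (∑ i, (x i : ℝ) ^ 2) with hnrm
  set M : ℝ := ∑' x, nrm x * q x with hMdef
  have hM0 : (0:ℝ) < M := lt_trans one_pos hM1
  -- the exponential weight
  set t : ℝ := 1 / (d * M) with htdef
  have hdM1 : (1:ℝ) ≤ d * M := by nlinarith
  have ht0 : 0 < t := by positivity
  have ht1 : t ≤ 1 := by
    rw [htdef, div_le_one (by positivity)]; linarith
  set f : ℤ → ℝ := fun m => Real.exp (-(t * |(m:ℝ)|)) with hfdef
  have hf0 : ∀ m, 0 ≤ f m := fun m => (Real.exp_pos _).le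
  set r : ℝ := Real.exp (-t) with hrdef
  have hr0 : 0 ≤ r := Real.exp_nonneg _
  have hr1 : r < 1 := by
    rw [hrdef, Real.exp_lt_one_iff]; linarith
  have hfnat : ∀ k : ℕ, f (k : ℤ) = r ^ k := by
    intro k
    rw [hfdef, hrdef, ← Real.exp_nat_mul]
    norm_num [mul_comm]
  have hfneg : ∀ k : ℕ, f (-(k + 1) : ℤ) = r ^ (k + 1) := by
    intro k
    rw [hfdef, hrdef, ← Real.exp_nat_mul]
    push_cast
    rw [abs_neg, abs_of_nonneg (by positivity)]
    ring_nf
  have hgeo : HasSum (fun k : ℕ => r ^ k) (1 - r)⁻¹ := hasSum_geometric_of_lt_one hr0 hr1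
  have hgeo' : HasSum (fun k : ℕ => r ^ (k + 1)) ((1 - r)⁻¹ * r) := by
    simpa [pow_succ] using hgeo.mul_right r
  have hfZ : HasSum f ((1 - r)⁻¹ + (1 - r)⁻¹ * r) := by
    refine HasSum.of_nat_of_neg_add_one ?_ ?_
    · exact hgeo.congr_fun hfnat
    · exact hgeo'.congr_fun hfneg
  have hfsummable : Summable f := hfZ.summable
  have h1r : 1 - r ≥ t / 2 := by
    have h1 : t + 1 ≤ Real.exp t := Real.add_one_le_exp t
    have h2 : r = (Real.exp t)⁻¹ := by rw [hrdef, ← Real.exp_neg]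
    have h3 : r ≤ (t + 1)⁻¹ := by
      rw [h2]
      exact inv_anti₀ (by linarith) h1
    have h4 : (t + 1)⁻¹ ≤ 1 - t / 2 := by
      rw [inv_le_iff_one_le_mul₀ (by linarith)]
      nlinarith
    linarith
  have hS : ∑' m, f m ≤ 4 * (d * M) := by
    have : ∑' m, f m = (1 - r)⁻¹ + (1 - r)⁻¹ * r := hfZ.tsum_eq
    have hinv : (1 - r)⁻¹ ≤ 2 / t := by
      rw [inv_le_iff_one_le_mul₀ (by linarith)]
      rw [div_mul_eq_mul_div, le_div_iff₀ ht0]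
      nlinarith
    have h2t : 2 / t = 2 * (d * M) := by
      rw [htdef]; field_simp
    nlinarith [mul_nonneg (sub_nonneg.mpr hr1.le) (inv_nonneg.mpr (sub_nonneg.mpr hr1.le)),
      (inv_nonneg.mpr (sub_nonneg.mpr hr1.le) : (0:ℝ) ≤ (1-r)⁻¹), hr0, hr1, hinv, h2t,
      mul_le_mul_of_nonneg_left hr1.le (inv_nonneg.mpr (sub_nonneg.mpr hr1.le) : (0:ℝ) ≤ (1-r)⁻¹)]
  obtain ⟨hPsum, hPeq⟩ := pi_prod_summable hf0 hfsummable d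
  -- the weight function w
  set w : (Fin d → ℤ) → ℝ := fun x => Real.exp (-(nrm x / M)) with hwdef
  have hnrm0 : ∀ x, 0 ≤ nrm x := fun x => Real.sqrt_nonneg _
  have habs_le : ∀ (x : Fin d → ℤ) (i : Fin d), |(x i : ℝ)| ≤ nrm x := by
    intro x i
    rw [hnrm, ← Real.sqrt_sq_eq_abs]
    exact Real.sqrt_le_sqrt (Finset.single_le_sum (fun j _ => sq_nonneg ((x j : ℝ))) (Finset.mem_univ i))
  have hw_le : ∀ x, w x ≤ ∏ i, f (x i) := by
    intro x
    have hprod : ∏ i, f (x i) = Real.exp (-(t * ∑ i, |(x i : ℝ)|)) := by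
      rw [← Real.exp_sum]
      congr 1
      rw [Finset.mul_sum]
      simp [neg_eq_iff_eq_neg, Finset.sum_neg_distrib]
    rw [hprod, hwdef, Real.exp_le_exp, neg_le_neg_iff]
    have hsum_le : ∑ i, |(x i : ℝ)| ≤ d * nrm x := by
      calc ∑ i, |(x i : ℝ)| ≤ ∑ _i : Fin d, nrm x := Finset.sum_le_sum fun i _ => habs_le x i
        _ = d * nrm x := by simp [mul_comm]
    calc t * ∑ i, |(x i : ℝ)| ≤ t * (d * nrm x) :=
          mul_le_mul_of_nonneg_left hsum_le ht0.le
      _ = nrm x / M := by rw [htdef]; field_simp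
  have hw0 : ∀ x, 0 ≤ w x := fun x => (Real.exp_pos _).le
  have hwsum : Summable w := Summable.of_nonneg_of_le hw0 hw_le hPsum
  set W : ℝ := ∑' x, w x with hWdef
  have hW1 : 1 ≤ W := by
    have h0 : w 0 = 1 := by
      simp [hwdef, hnrm]
    calc (1:ℝ) = w 0 := h0.symm
      _ ≤ W := Summable.le_tsum hwsum 0 fun j _ => hw0 j
  have hW0 : 0 < W := lt_of_lt_of_le one_pos hW1
  have hWle : W ≤ (4 * (d * M)) ^ d := by
    calc W ≤ ∑' x : Fin d → ℤ, ∏ i, f (x i) := Summable.tsum_le_tsum hw_le hwsum hPsum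
      _ = (∑' m, f m) ^ d := hPeq
      _ ≤ (4 * (d * M)) ^ d := by
          apply pow_le_pow_left₀ _ hS
          exact tsum_nonneg hf0
  -- the dominating function g
  set g : (Fin d → ℤ) → ℝ :=
    fun x => w x / W - q x + q x * Real.log W + nrm x * q x / M with hgdef
  have hu0 : ∀ x, 0 ≤ q x * Real.log (1 / q x) := by
    intro x
    rcases eq_or_lt_of_le (hq0 x) with h | h
    · simp [← h]
    · exact mul_nonneg (hq0 x) (Real.log_nonneg (by
        rw [le_div_iff₀ h]; simpa using hq1 x))
  have hu_le : ∀ x, q x * Real.log (1 / q x) ≤ g x := by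
    intro x
    rcases eq_or_lt_of_le (hq0 x) with h | h
    · simp [hgdef, ← h]
      positivity
    · have hwx : 0 < w x := Real.exp_pos _
      have hlog : Real.log (1 / q x) =
          Real.log (w x / (q x * W)) + Real.log W + nrm x / M := by
        rw [Real.log_div hwx.ne' (by positivity), Real.log_mul h.ne' hW0.ne',
          hwdef, Real.log_exp, one_div, Real.log_inv]
        ring
      have hkey : Real.log (w x / (q x * W)) ≤ w x / (q x * W) - 1 :=
        Real.log_le_sub_one_of_pos (by positivity)
      have h3 : q x * Real.log (w x / (q x * W)) ≤ w x / W - q x := by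
        calc q x * Real.log (w x / (q x * W)) ≤ q x * (w x / (q x * W) - 1) :=
              mul_le_mul_of_nonneg_left hkey (hq0 x)
          _ = w x / W - q x := by field_simp
      rw [hlog, hgdef]
      have expand : q x * (Real.log (w x / (q x * W)) + Real.log W + nrm x / M)
          = q x * Real.log (w x / (q x * W)) + q x * Real.log W + nrm x * q x / M := by
        ring
      rw [expand]
      linarith
  have hqsummable : Summable q := hqsum.summable
  have hgsum : Summable g := by
    apply Summable.add
    apply Summable.add
    apply Summable.sub
    · exact hwsum.div_const W
    · exact hqsummable
    · exact hqsummable.mul_right _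
    · exact hmom.div_const M
  have husum : Summable (fun x => q x * Real.log (1 / q x)) :=
    Summable.of_nonneg_of_le hu0 hu_le hgsum
  refine ⟨husum, ?_⟩
  set H : ℝ := ∑' x, q x * Real.log (1 / q x) with hHdef
  have hgsum_eq : ∑' x, g x = Real.log W + 1 := by
    rw [hgdef]
    rw [Summable.tsum_add (((hwsum.div_const W).sub hqsummable).add (hqsummable.mul_right _)) (hmom.div_const M)]
    rw [Summable.tsum_add ((hwsum.div_const W).sub hqsummable) (hqsummable.mul_right _)]
    rw [Summable.tsum_sub (hwsum.div_const W) hqsummable]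
    rw [tsum_div_const, tsum_div_const, tsum_mul_right, hqsum.tsum_eq]
    rw [← hWdef, ← hMdef]
    field_simp
    ring
  have hH_le : H ≤ Real.log W + 1 := by
    rw [hHdef, ← hgsum_eq]
    exact Summable.tsum_le_tsum hu_le husum hgsum
  have hlogW : Real.log W ≤ d * Real.log (4 * (d * M)) := by
    calc Real.log W ≤ Real.log ((4 * (d * M)) ^ d) := Real.log_le_log hW0 hWle
      _ = d * Real.log (4 * (d * M)) := by rw [Real.log_pow]
  have hHd : H / d ≤ Real.log (4 * (d * M)) + 1 := by
    rw [div_le_iff₀ hd0]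
    calc H ≤ Real.log W + 1 := hH_le
      _ ≤ d * Real.log (4 * (d * M)) + 1 := by linarith
      _ ≤ (Real.log (4 * (d * M)) + 1) * d := by nlinarith
  have hexp : Real.exp (H / d) ≤ 4 * (d * M) * Real.exp 1 := by
    calc Real.exp (H / d) ≤ Real.exp (Real.log (4 * (d * M)) + 1) := Real.exp_le_exp.mpr hHd
      _ = 4 * (d * M) * Real.exp 1 := by
          rw [Real.exp_add, Real.exp_log (by positivity)]
  show (4 * (d:ℝ) * Real.exp 1)⁻¹ * Real.exp (H / d) ≤ M
  have hpos : (0:ℝ) < 4 * d * Real.exp 1 := by positivity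
  calc (4 * (d:ℝ) * Real.exp 1)⁻¹ * Real.exp (H / d)
      ≤ (4 * (d:ℝ) * Real.exp 1)⁻¹ * (4 * d * Real.exp 1 * M) := by
        apply mul_le_mul_of_nonneg_left _ (inv_nonneg.mpr hpos.le)
        linarith [hexp]
    _ = M := by field_simp
end
end

section
/- There exists a universal constant b > 0 with the following property. Let d ≥ 1, s_* > 0, and let q : ℤ^d → (0, ∞) be strictly positive with ∑_{x∈ℤ^d} q(x) = 1. Let s, v : ℤ^d × E → ℝ be bounded families such that for all x ∈ ℤ^d and k ∈ E: v_k(x) = −v_{−k}(x + k) (skew symmetry), ∑_{k∈E} v_k(x) = 0 (divergence-freeness), and s_k(x) ≥ max(s_*, |v_k(x)|). Assume the summability condition ∑_{x∈ℤ^d, k∈E} s_k(x)(q(x+k) + q(x))|log q(x+k) − log q(x)| < ∞. Then (1/2) ∑_{x∈ℤ^d, k∈E} s_k(x)(q(x+k) − q(x))(log q(x+k) − log q(x)) − (1/2) ∑_{x∈ℤ^d, k∈E} v_k(x)(q(x+k) + q(x))(log q(x+k) − log q(x)) ≥ b · s_* · ∑_{x∈ℤ^d, k∈E} ((q(x+k)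 − q(x))/(q(x+k) + q(x)))² q(x). -/
open MeasureTheory Filter Finset

noncomputable section

/-- The set `E` of the `2d` signed unit vectors of `ℤ^d`. -/
def unitVecs (d : ℕ) : Finset (Fin d → ℤ) :=
  Finset.image (fun p : Fin d × Bool =>
    fun j => if j = p.1 then (if p.2 then 1 else -1) else 0) Finset.univ

lemma neg_mem_unitVecs {d : ℕ} {k : Fin d → ℤ} (hk : k ∈ unitVecs d) :
    -k ∈ unitVecs d := by
  simp only [unitVecs, Finset.mem_image] at hk ⊢
  obtain ⟨⟨i, b⟩, -, rfl⟩ := hk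
  refine ⟨⟨i, !b⟩, Finset.mem_univ _, ?_⟩
  funext j
  by_cases h : j = i <;> cases b <;> simp [h, Pi.neg_apply]

lemma key_ge (t : ℝ) (ht : 1 ≤ t) :
    ((t-1)/(t+1))^2 + |Real.log t - 2*((t-1)/(t+1))| ≤ ((t-1)/(t+1)) * Real.log t := by
  have ht0 : (0:ℝ) < t := by linarith
  set r := Real.sqrt t with hrdef
  have hr1 : 1 ≤ r := by
    rw [hrdef, show (1:ℝ) = Real.sqrt 1 by simp]
    exact Real.sqrt_le_sqrt ht
  have hr0 : 0 < r := by linarith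
  have hrt : r^2 = t := Real.sq_sqrt ht0.le
  have hlogr : Real.log t = 2 * Real.log r := by
    rw [hrdef, Real.log_sqrt ht0.le]; ring
  set L := Real.log t with hL
  have hub : L ≤ 2*(r-1) := by
    rw [hlogr]
    have := Real.log_le_sub_one_of_pos hr0
    linarith
  have hlbr : 2*(r-1) ≤ L * r := by
    have h1 : Real.log r⁻¹ ≤ r⁻¹ - 1 := Real.log_le_sub_one_of_pos (by positivity)
    rw [Real.log_inv] at h1
    have h2 : (1 - r⁻¹) * r ≤ Real.log r * r :=
      mul_le_mul_of_nonneg_right (by linarith) hr0.le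
    have h3 : (1 - r⁻¹) * r = r - 1 := by field_simp
    rw [h3] at h2
    rw [hlogr]; nlinarith
  have ht1 : (0:ℝ) < t + 1 := by linarith
  set u := (t-1)/(t+1) with hu
  have huev : u * (t+1) = t - 1 := by rw [hu]; field_simp
  have ht12 : (0:ℝ) < (t+1)^2 := by positivity
  have habs : |L - 2*u| ≤ u*L - u^2 := by
    rw [abs_le]
    constructor
    · have e : ((1+u)*L - 2*u - u^2) * (t+1)^2
          = 2*t*L*(t+1) - 2*(t-1)*(t+1) - (t-1)^2 := by
        linear_combination (L*(t+1) - 2*(t+1) - (u*(t+1)+(t-1))) * huev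
      have hstep : 4*r*(r-1)*(t+1) ≤ 2*t*L*(t+1) := by
        have h := mul_le_mul_of_nonneg_right hlbr
          (show (0:ℝ) ≤ 2*r*(t+1) by positivity)
        calc 4*r*(r-1)*(t+1) = (2*(r-1)) * (2*r*(t+1)) := by ring
          _ ≤ (L*r) * (2*r*(t+1)) := h
          _ = 2*t*L*(t+1) := by rw [← hrt]; ring
      have hpoly : 4*r*(r-1)*(t+1) - 2*(t-1)*(t+1) - (t-1)^2 = (r-1)^4 := by
        rw [← hrt]; ring
      have hX : 0 ≤ ((1+u)*L - 2*u - u^2) * (t+1)^2 := by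
        rw [e]; nlinarith [pow_nonneg (by linarith : (0:ℝ) ≤ r - 1) 4]
      have hY : 0 ≤ (1+u)*L - 2*u - u^2 := (mul_nonneg_iff_of_pos_right ht12).1 hX
      nlinarith [hY]
    · have e : (2*u - u^2 - (1-u)*L) * (t+1)^2
          = 2*(t-1)*(t+1) - (t-1)^2 - 2*L*(t+1) := by
        linear_combination (2*(t+1) - (u*(t+1)+(t-1)) + L*(t+1)) * huev
      have hstep : 2*L*(t+1) ≤ 4*(r-1)*(t+1) := by nlinarith [hub]
      have hpoly : 2*(t-1)*(t+1) - (t-1)^2 - 4*(r-1)*(t+1) = (r-1)^4 := by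
        rw [← hrt]; ring
      have hX : 0 ≤ (2*u - u^2 - (1-u)*L) * (t+1)^2 := by
        rw [e]; nlinarith [pow_nonneg (by linarith : (0:ℝ) ≤ r - 1) 4]
      have hY : 0 ≤ 2*u - u^2 - (1-u)*L := (mul_nonneg_iff_of_pos_right ht12).1 hX
      nlinarith [hY]
  linarith [habs]

lemma key_ineq (t : ℝ) (ht : 0 < t) :
    ((t-1)/(t+1))^2 + |Real.log t - 2*((t-1)/(t+1))| ≤ ((t-1)/(t+1)) * Real.log t := by
  rcases le_or_gt 1 t with h | h
  · exact key_ge t h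
  · have hne : t ≠ 0 := ne_of_gt ht
    have ht' : 1 ≤ t⁻¹ := one_le_inv_iff₀.2 ⟨ht, h.le⟩
    have key := key_ge t⁻¹ ht'
    have e1 : (t⁻¹-1)/(t⁻¹+1) = -((t-1)/(t+1)) := by
      rw [neg_div', div_eq_div_iff (by positivity : (0:ℝ) < t⁻¹+1).ne'
        (by positivity : (0:ℝ) < t+1).ne']
      have e : t⁻¹ * t = 1 := inv_mul_cancel₀ hne
      nlinarith [e]
    have e2 : Real.log t⁻¹ = -Real.log t := Real.log_inv t
    rw [e1, e2] at key
    have e3 : |-Real.log t - 2 * -((t-1)/(t+1))| = |Real.log t - 2*((t-1)/(t+1))| := by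
      rw [← abs_neg]; ring_nf
    rw [e3] at key
    nlinarith [key]

/-- Pointwise inequality for one pair `(x, k)`. -/
lemma pointwise_ineq (sl s v a c : ℝ) (hsl : 0 < sl) (ha : 0 < a) (hc : 0 < c)
    (hs : max sl |v| ≤ s) :
    sl * (((a - c) / (a + c))^2 * c) ≤
      s * (a - c) * (Real.log a - Real.log c)
        - v * (a + c) * (Real.log a - Real.log c) + 2 * (v * (a - c)) := by
  have hac : (0:ℝ) < a + c := by linarith
  set t := a / c with htdef
  have ht : 0 < t := by positivity
  have hLt : Real.log t = Real.log a - Real.log c := Real.log_div (ne_of_gt ha) (ne_of_gt hc)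
  have hut : (t-1)/(t+1) = (a-c)/(a+c) := by
    rw [htdef, div_eq_div_iff (by positivity : (0:ℝ) < a/c+1).ne' hac.ne']
    field_simp
  have key := key_ineq t ht
  rw [hLt, hut] at key
  set u := (a-c)/(a+c) with hudef
  set L := Real.log a - Real.log c with hLdef
  have hsv : |v| ≤ s := le_trans (le_max_right _ _) hs
  have hssl : sl ≤ s := le_trans (le_max_left _ _) hs
  have hs0 : 0 < s := lt_of_lt_of_le hsl hssl
  have huev : u * (a+c) = a - c := by rw [hudef]; field_simp
  have hv1 : v * ((a+c)*L - 2*(a-c)) ≤ s * ((a+c) * |L - 2*u|) := by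
    calc v * ((a+c)*L - 2*(a-c)) ≤ |v * ((a+c)*L - 2*(a-c))| := le_abs_self _
      _ = |v| * |(a+c)*L - 2*(a-c)| := abs_mul _ _
      _ = |v| * ((a+c) * |L - 2*u|) := by
          rw [show (a+c)*L - 2*(a-c) = (a+c) * (L - 2*u) by
              rw [← huev]; ring, abs_mul, abs_of_pos hac]
      _ ≤ s * ((a+c) * |L - 2*u|) := by
          apply mul_le_mul_of_nonneg_right hsv; positivity
  have hsym : s * (a - c) * L = s * ((a+c) * (u * L)) := by rw [← huev]; ring
  have hmain : s * ((a+c) * (u*L)) - s * ((a+c) * |L - 2*u|) ≥ s * ((a+c) * u^2) := by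
    have := mul_le_mul_of_nonneg_left key (le_of_lt (mul_pos hs0 hac))
    nlinarith [this]
  have hfin : sl * (u^2 * c) ≤ s * ((a+c) * u^2) := by
    have h1 : sl * (u^2 * c) ≤ s * (u^2 * c) :=
      mul_le_mul_of_nonneg_right hssl (by positivity)
    have h2 : s * (u^2 * c) ≤ s * ((a+c) * u^2) := by
      apply mul_le_mul_of_nonneg_left _ hs0.le
      nlinarith [sq_nonneg u, ha]
    linarith
  have hrw : v * (a + c) * L - 2 * (v * (a - c)) = v * ((a+c)*L - 2*(a-c)) := by ring
  nlinarith [hv1, hmain, hfin, hsym, hrw]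

/-- **Entropy-production lower bound (display (3.3) of the paper).**
There is a universal `b > 0` such that for any probability mass function `q > 0` on `ℤ^d`
and bounded families `s, v` with `v` skew-symmetric and divergence-free and
`s_k(x) ≥ max(s_*, |v_k(x)|)`, under the natural summability condition, the entropy
production is bounded below by `b · s_*` times the Fisher-entropy-type quantity. -/
theorem entropy_production_lower_bound :
    ∃ b : ℝ, 0 < b ∧
      ∀ (d : ℕ), 1 ≤ d →
      ∀ (sLow : ℝ), 0 < sLow →
      ∀ (q : (Fin d → ℤ) → ℝ)
        (s v : (Fin d → ℤ) → (Fin d → ℤ) → ℝ),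
        (∀ x, 0 < q x) → HasSum q 1 →
        (∃ B : ℝ, ∀ x, ∀ k ∈ unitVecs d, |s x k| ≤ B ∧ |v x k| ≤ B) →
        -- skew symmetry of the flow `v`
        (∀ x, ∀ k ∈ unitVecs d, v x k = -v (x + k) (-k)) →
        -- divergence-freeness of `v`
        (∀ x, ∑ k ∈ unitVecs d, v x k = 0) →
        -- ellipticity and domination of `v` by `s`
        (∀ x, ∀ k ∈ unitVecs d, max sLow |v x k| ≤ s x k) →
        -- summability condition
        (∀ k ∈ unitVecs d, Summable (fun x =>
          s x k * (q (x + k) + q x) * |Real.log (q (x + k)) - Real.log (q x)|)) →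
        b * sLow * ∑ k ∈ unitVecs d, ∑' x,
            ((q (x + k) - q x) / (q (x + k) + q x)) ^ 2 * q x ≤
          (1 / 2) * ∑ k ∈ unitVecs d, ∑' x,
              s x k * (q (x + k) - q x) * (Real.log (q (x + k)) - Real.log (q x)) -
            (1 / 2) * ∑ k ∈ unitVecs d, ∑' x,
              v x k * (q (x + k) + q x) * (Real.log (q (x + k)) - Real.log (q x)) := by
  refine ⟨1/2, by norm_num, ?_⟩
  intro d _hd sLow hsl q s v hq hQ hBex hskew hdiv hell hsum
  obtain ⟨B, hB⟩ := hBex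
  have hqS : Summable q := hQ.summable
  -- helper: comparison test
  have cmp : ∀ (f g : (Fin d → ℤ) → ℝ), Summable g → (∀ x, |f x| ≤ g x) → Summable f := by
    intro f g hg h
    rw [← summable_abs_iff]
    exact Summable.of_nonneg_of_le (fun _ => abs_nonneg _) h hg
  have hqk : ∀ k : Fin d → ℤ, Summable (fun x => q (x + k)) :=
    fun k => (Equiv.addRight k).summable_iff.2 hqS
  -- notation
  set L : (Fin d → ℤ) → (Fin d → ℤ) → ℝ :=
    fun k x => Real.log (q (x + k)) - Real.log (q x) with hLdef
  -- per-k facts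
  have hspos : ∀ x, ∀ k ∈ unitVecs d, 0 < s x k :=
    fun x k hk => lt_of_lt_of_le (lt_of_lt_of_le hsl (le_max_left _ _)) (hell x k hk)
  have hvs : ∀ x, ∀ k ∈ unitVecs d, |v x k| ≤ s x k :=
    fun x k hk => le_trans (le_max_right _ _) (hell x k hk)
  -- summability of the various series, for k ∈ E
  have hsumA : ∀ k ∈ unitVecs d,
      Summable (fun x => s x k * (q (x + k) - q x) * L k x) := by
    intro k hk
    apply cmp _ _ (hsum k hk)
    intro x
    show |s x k * (q (x + k) - q x) * L k x| ≤ s x k * (q (x + k) + q x) * |L k x|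
    rw [abs_mul, abs_mul, abs_of_pos (hspos x k hk)]
    have h1 : |q (x + k) - q x| ≤ q (x + k) + q x := by
      have := abs_sub (q (x+k)) (q x)
      rw [abs_of_pos (hq _), abs_of_pos (hq _)] at this
      exact this
    have h2 : (0:ℝ) ≤ |L k x| := abs_nonneg _
    exact mul_le_mul_of_nonneg_right
      (mul_le_mul_of_nonneg_left h1 (hspos x k hk).le) h2
  have hsumV : ∀ k ∈ unitVecs d,
      Summable (fun x => v x k * (q (x + k) + q x) * L k x) := by
    intro k hk
    apply cmp _ _ (hsum k hk)
    intro x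
    show |v x k * (q (x + k) + q x) * L k x| ≤ s x k * (q (x + k) + q x) * |L k x|
    rw [abs_mul, abs_mul]
    have h1 : |q (x + k) + q x| = q (x + k) + q x :=
      abs_of_pos (by have := hq (x+k); have := hq x; linarith)
    rw [h1]
    have hv := hvs x k hk
    have hden : (0:ℝ) ≤ q (x + k) + q x := by have := hq (x+k); have := hq x; linarith
    exact mul_le_mul_of_nonneg_right
      (mul_le_mul_of_nonneg_right hv hden) (abs_nonneg _)
  have hsumvq : ∀ k ∈ unitVecs d, Summable (fun x => v x k * q x) := by
    intro k hk
    apply cmp _ _ (hqS.mul_left B)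
    intro x
    rw [abs_mul, abs_of_pos (hq x)]
    exact mul_le_mul_of_nonneg_right (hB x k hk).2 (hq x).le
  have hsumvqk : ∀ k ∈ unitVecs d, Summable (fun x => v x k * q (x + k)) := by
    intro k hk
    apply cmp _ _ ((hqk k).mul_left B)
    intro x
    rw [abs_mul, abs_of_pos (hq (x + k))]
    exact mul_le_mul_of_nonneg_right (hB x k hk).2 (hq (x+k)).le
  have hsumD : ∀ k ∈ unitVecs d, Summable (fun x => v x k * (q (x + k) - q x)) := by
    intro k hk
    have : (fun x => v x k * (q (x + k) - q x))
        = fun x => v x k * q (x + k) - v x k * q x := by funext x; ring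
    rw [this]
    exact (hsumvqk k hk).sub (hsumvq k hk)
  have hsumF : ∀ k : Fin d → ℤ,
      Summable (fun x => ((q (x + k) - q x) / (q (x + k) + q x)) ^ 2 * q x) := by
    intro k
    apply cmp _ _ hqS
    intro x
    have hden : (0:ℝ) < q (x + k) + q x := by have := hq (x+k); have := hq x; linarith
    have h1 : |q (x + k) - q x| ≤ q (x + k) + q x := by
      have := abs_sub (q (x+k)) (q x)
      rw [abs_of_pos (hq _), abs_of_pos (hq _)] at this
      exact this
    have h2 : ((q (x + k) - q x) / (q (x + k) + q x)) ^ 2 ≤ 1 := by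
      rw [sq_le_one_iff_abs_le_one, abs_div, abs_of_pos hden, div_le_one hden]
      exact h1
    rw [abs_mul, abs_of_pos (hq x), abs_of_nonneg (sq_nonneg _)]
    nlinarith [hq x]
  -- the cancellation: sum over k of tsum of D is 0
  have hPzero : ∑ k ∈ unitVecs d, ∑' x, v x k * q x = 0 := by
    rw [← Summable.tsum_finsetSum (fun k hk => hsumvq k hk)]
    have : ∀ x : Fin d → ℤ, ∑ k ∈ unitVecs d, v x k * q x = 0 := by
      intro x
      rw [← Finset.sum_mul, hdiv x, zero_mul]
    simp only [this, tsum_zero]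
  have hQzero : ∑ k ∈ unitVecs d, ∑' x, v x k * q (x + k) = 0 := by
    have hshift : ∀ k ∈ unitVecs d,
        ∑' x, v x k * q (x + k) = -∑' x, v x (-k) * q x := by
      intro k hk
      have h1 : ∀ x, v x k * q (x + k) = -(v (x + k) (-k) * q (x + k)) := by
        intro x; rw [hskew x k hk]; ring
      calc ∑' x, v x k * q (x + k) = ∑' x, -(v (x + k) (-k) * q (x + k)) :=
            tsum_congr h1
        _ = -∑' x, v (x + k) (-k) * q (x + k) := tsum_neg
        _ = -∑' y, v y (-k) * q y := by
            congr 1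
            exact (Equiv.addRight k).tsum_eq (fun y => v y (-k) * q y)
    calc ∑ k ∈ unitVecs d, ∑' x, v x k * q (x + k)
        = ∑ k ∈ unitVecs d, -∑' x, v x (-k) * q x :=
          Finset.sum_congr rfl hshift
      _ = -∑ k ∈ unitVecs d, ∑' x, v x (-k) * q x := by rw [Finset.sum_neg_distrib]
      _ = -∑ k ∈ unitVecs d, ∑' x, v x k * q x := by
          congr 1
          apply Finset.sum_equiv (Equiv.neg _)
          · intro i
            constructor
            · exact fun h => neg_mem_unitVecs h
            · intro h; have := neg_mem_unitVecs h; simpa using this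
          · intro i _; rfl
      _ = 0 := by rw [hPzero, neg_zero]
  have hDzero : ∑ k ∈ unitVecs d, ∑' x, v x k * (q (x + k) - q x) = 0 := by
    have : ∀ k ∈ unitVecs d, ∑' x, v x k * (q (x + k) - q x)
        = (∑' x, v x k * q (x + k)) - ∑' x, v x k * q x := by
      intro k hk
      rw [← Summable.tsum_sub (hsumvqk k hk) (hsumvq k hk)]
      congr 1; funext x; ring
    rw [Finset.sum_congr rfl this, Finset.sum_sub_distrib, hPzero, hQzero, sub_zero]
  -- per-k lower bound
  have hkey : ∀ k ∈ unitVecs d,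
      sLow * ∑' x, ((q (x + k) - q x) / (q (x + k) + q x)) ^ 2 * q x ≤
        (∑' x, s x k * (q (x + k) - q x) * L k x)
          - (∑' x, v x k * (q (x + k) + q x) * L k x)
          + 2 * ∑' x, v x k * (q (x + k) - q x) := by
    intro k hk
    have hptw : ∀ x, sLow * (((q (x + k) - q x) / (q (x + k) + q x)) ^ 2 * q x) ≤
        s x k * (q (x + k) - q x) * L k x
          - v x k * (q (x + k) + q x) * L k x + 2 * (v x k * (q (x + k) - q x)) :=
      fun x => pointwise_ineq sLow (s x k) (v x k) (q (x + k)) (q x)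
        hsl (hq _) (hq _) (hell x k hk)
    have hsumRHS : Summable (fun x =>
        s x k * (q (x + k) - q x) * L k x
          - v x k * (q (x + k) + q x) * L k x + 2 * (v x k * (q (x + k) - q x))) :=
      (((hsumA k hk).sub (hsumV k hk)).add ((hsumD k hk).mul_left 2))
    have hsumLHS : Summable (fun x =>
        sLow * (((q (x + k) - q x) / (q (x + k) + q x)) ^ 2 * q x)) :=
      (hsumF k).mul_left sLow
    have h1 := Summable.tsum_le_tsum hptw hsumLHS hsumRHS
    rw [tsum_mul_left] at h1
    rw [Summable.tsum_add ((hsumA k hk).sub (hsumV k hk)) ((hsumD k hk).mul_left 2),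
      Summable.tsum_sub (hsumA k hk) (hsumV k hk), tsum_mul_left] at h1
    exact h1
  -- sum over k
  have hsumk := Finset.sum_le_sum hkey
  rw [← Finset.mul_sum] at hsumk
  rw [Finset.sum_add_distrib, Finset.sum_sub_distrib, ← Finset.mul_sum, hDzero,
    mul_zero, add_zero] at hsumk
  linarith [hsumk]
end
end

section
/- Let 0 < ε ≤ 1 and set α := (2 + ε)/(2 + 2ε) ∈ [3/4, 1). Let t > 0 and let G : (0, t] → [0, ∞) be continuously differentiable with G'(u) + 1/(2u) ≥ 0 for all u ∈ (0, t], and suppose that u ↦ u^{1−α} G'(u) is integrable on (0, t]. Then ∫₀^t (G'(u) + 1/(2u))^α du ≤ 3 t^{1−α} (ε^{−1} + G(t)). -/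
open MeasureTheory Set

noncomputable section

/-- **Calculus lemma (final step of the proof of Lemma 3, following Nash).**
Let `0 < ε ≤ 1`, `α := (2+ε)/(2+2ε)`, `t > 0` and let `G` be continuously differentiable
on `(0, t]`, nonnegative there, with `G'(u) + 1/(2u) ≥ 0` and `u ↦ u^(1-α) G'(u)`
integrable on `(0, t]`.  Then `∫₀^t (G'(u) + 1/(2u))^α du ≤ 3 t^(1-α) (ε⁻¹ + G t)`. -/
theorem nash_calculus_lemma (ε α t : ℝ) (hε0 : 0 < ε) (hε1 : ε ≤ 1)
    (hα : α = (2 + ε) / (2 + 2 * ε)) (ht : 0 < t)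
    (G G' : ℝ → ℝ)
    (hderiv : ∀ u ∈ Ioc (0 : ℝ) t, HasDerivAt G (G' u) u)
    (hcont : ContinuousOn G' (Ioc (0 : ℝ) t))
    (hGnonneg : ∀ u ∈ Ioc (0 : ℝ) t, 0 ≤ G u)
    (hpos : ∀ u ∈ Ioc (0 : ℝ) t, 0 ≤ G' u + 1 / (2 * u))
    (hint : IntegrableOn (fun u => u ^ (1 - α) * G' u) (Ioc (0 : ℝ) t)) :
    ∫ u in Ioc (0 : ℝ) t, (G' u + 1 / (2 * u)) ^ α ≤
      3 * t ^ (1 - α) * (ε⁻¹ + G t) := by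
  have hden : (0:ℝ) < 2 + 2 * ε := by linarith
  have hα0 : 0 < α := by rw [hα]; positivity
  have hα1 : α < 1 := by rw [hα, div_lt_one hden]; linarith
  have hβ0 : 0 < 1 - α := by linarith
  have hβval : 1 - α = ε / (2 + 2 * ε) := by
    rw [hα]; field_simp; ring
  set S : Set ℝ := Ioc (0:ℝ) t with hS
  -- integrability of u ^ (-α) on S
  have hψint : IntegrableOn (fun u : ℝ => u ^ (-α)) S := by
    rw [hS, ← intervalIntegrable_iff_integrableOn_Ioc_of_le ht.le]
    exact intervalIntegral.intervalIntegrable_rpow' (by linarith)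
  -- integration by parts on [a, t]
  have hparts : ∀ a ∈ S, ∫ u in Ioc a t, u ^ (1-α) * G' u ≤ t ^ (1-α) * G t := by
    intro a ha
    obtain ⟨ha0, hat⟩ := ha
    have hsub : Icc a t ⊆ S := fun x hx => ⟨lt_of_lt_of_le ha0 hx.1, hx.2⟩
    have huIcc : uIcc a t = Icc a t := uIcc_of_le hat
    have hu : ∀ x ∈ uIcc a t, HasDerivAt (fun x : ℝ => x ^ (1-α)) ((1-α) * x ^ (1-α-1)) x := by
      intro x hx
      rw [huIcc] at hx
      exact Real.hasDerivAt_rpow_const (Or.inl (ne_of_gt (lt_of_lt_of_le ha0 hx.1)))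
    have hv : ∀ x ∈ uIcc a t, HasDerivAt G (G' x) x := by
      intro x hx; rw [huIcc] at hx; exact hderiv x (hsub hx)
    have hu' : IntervalIntegrable (fun x : ℝ => (1-α) * x ^ (1-α-1)) volume a t := by
      apply ContinuousOn.intervalIntegrable
      rw [huIcc]
      exact continuousOn_const.mul (ContinuousOn.rpow_const continuousOn_id
        fun x hx => Or.inl (ne_of_gt (lt_of_lt_of_le ha0 hx.1)))
    have hv' : IntervalIntegrable G' volume a t := by
      apply ContinuousOn.intervalIntegrable
      rw [huIcc]; exact hcont.mono hsub
    have hIBP := intervalIntegral.integral_mul_deriv_eq_deriv_mul hu hv hu' hv'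
    rw [← intervalIntegral.integral_of_le hat, hIBP]
    have h1 : 0 ≤ a ^ (1-α) * G a :=
      mul_nonneg (Real.rpow_nonneg ha0.le _) (hGnonneg a ⟨ha0, hat⟩)
    have h2 : 0 ≤ ∫ x in a..t, (1-α) * x ^ (1-α-1) * G x := by
      apply intervalIntegral.integral_nonneg hat
      intro x hx
      have hx0 : 0 < x := lt_of_lt_of_le ha0 hx.1
      exact mul_nonneg (mul_nonneg hβ0.le (Real.rpow_nonneg hx0.le _)) (hGnonneg x (hsub hx))
    linarith
  -- limit a → 0
  have hJ : ∫ u in S, u ^ (1-α) * G' u ≤ t ^ (1-α) * G t := by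
    set s : ℕ → Set ℝ := fun n => Ioc (t / (n+1)) t with hs
    have hsm : ∀ n, MeasurableSet (s n) := fun n => measurableSet_Ioc
    have hmono : Monotone s := by
      intro n m hnm
      apply Ioc_subset_Ioc_left
      have h1 : ((n:ℝ) + 1) ≤ (m:ℝ) + 1 := by
        have : (n:ℝ) ≤ m := Nat.cast_le.2 hnm
        linarith
      exact div_le_div_of_nonneg_left ht.le (by positivity) h1
    have hunion : ⋃ n, s n = S := by
      apply Subset.antisymm
      · exact iUnion_subset fun n => Ioc_subset_Ioc_left (by positivity)
      · intro u hu
        obtain ⟨n, hn⟩ := exists_nat_gt (t / u)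
        refine mem_iUnion.2 ⟨n, ?_, hu.2⟩
        have h1 : t < n * u := (div_lt_iff₀ hu.1).1 hn
        rw [div_lt_iff₀ (by positivity : (0:ℝ) < (n:ℝ)+1)]
        nlinarith [hu.1]
    have htend := MeasureTheory.tendsto_setIntegral_of_monotone hsm hmono
      (by rw [hunion]; exact hint)
    rw [hunion] at htend
    refine le_of_tendsto htend (Filter.Eventually.of_forall fun n => ?_)
    refine hparts _ ⟨by positivity, ?_⟩
    exact div_le_self ht.le (by simp)
  -- the combined function φ
  set φ : ℝ → ℝ := fun u => u ^ (1-α) * (G' u + 1/(2*u)) with hφ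
  have hφeq : ∀ u ∈ S, φ u = u ^ (1-α) * G' u + u ^ (-α) / 2 := by
    intro u hu
    have hu0 : 0 < u := hu.1
    have h2 : u ^ (1-α) * u⁻¹ = u ^ (-α) := by
      rw [← Real.rpow_neg_one u, ← Real.rpow_add hu0, show (1-α)+(-1) = -α from by ring]
    have h3 : u ^ (1-α) * (1/(2*u)) = u ^ (-α) / 2 := by
      rw [one_div, mul_inv]
      calc u ^ (1-α) * (2⁻¹ * u⁻¹) = (u ^ (1-α) * u⁻¹) * 2⁻¹ := by ring
        _ = u ^ (-α) / 2 := by rw [h2]; ring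
    simp only [hφ, mul_add, h3]
  have hφint : IntegrableOn φ S := by
    exact MeasureTheory.IntegrableOn.congr_fun (hint.add (hψint.div_const 2))
      (fun u hu => (hφeq u hu).symm) measurableSet_Ioc
  have hφnonneg : ∀ u ∈ S, 0 ≤ φ u := fun u hu =>
    mul_nonneg (Real.rpow_nonneg hu.1.le _) (hpos u hu)
  have hBval : ∫ u in S, u ^ (-α) = t ^ (1-α) / (1-α) := by
    rw [hS, ← intervalIntegral.integral_of_le ht.le,
      integral_rpow (Or.inl (by linarith : (-1:ℝ) < -α))]
    rw [Real.zero_rpow (by linarith : -α + 1 ≠ 0), sub_zero]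
    have h4 : -α + 1 = 1 - α := by ring
    rw [h4]
  have hAle : ∫ u in S, φ u ≤ t ^ (1-α) * G t + t ^ (1-α) / (1-α) / 2 := by
    have hsplit : ∫ u in S, φ u
        = (∫ u in S, u ^ (1-α) * G' u) + (∫ u in S, u ^ (-α)) / 2 := by
      rw [setIntegral_congr_fun measurableSet_Ioc hφeq,
        integral_add hint (hψint.div_const 2), integral_div]
    rw [hsplit, hBval]
    linarith
  -- Hölder
  set F : ℝ → ℝ := fun u => (φ u) ^ α with hF
  set H : ℝ → ℝ := fun u => (u ^ (-α)) ^ (1-α) with hH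
  have hae : ∀ᵐ u ∂(volume.restrict S), u ∈ S := ae_restrict_mem measurableSet_Ioc
  have hFmem : MemLp F (ENNReal.ofReal (1/α)) (volume.restrict S) := by
    have h1 : MemLp φ 1 (volume.restrict S) := memLp_one_iff_integrable.2 hφint
    have h2 := (memLp_norm_rpow_iff (q := ENNReal.ofReal α) h1.1
      (by simp only [Ne, ENNReal.ofReal_eq_zero, not_le]; linarith) (by simp)).2 h1
    rw [ENNReal.toReal_ofReal hα0.le] at h2
    have hq : (1 : ENNReal) / ENNReal.ofReal α = ENNReal.ofReal (1/α) := by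
      rw [one_div, one_div, ← ENNReal.ofReal_inv_of_pos hα0]
    rw [hq] at h2
    refine MemLp.ae_eq ?_ h2
    filter_upwards [hae] with u hu
    rw [Real.norm_of_nonneg (hφnonneg u hu)]
  have hHmem : MemLp H (ENNReal.ofReal (1/(1-α))) (volume.restrict S) := by
    have h1 : MemLp (fun u : ℝ => u ^ (-α)) 1 (volume.restrict S) :=
      memLp_one_iff_integrable.2 hψint
    have h2 := (memLp_norm_rpow_iff (q := ENNReal.ofReal (1-α)) h1.1
      (by simp only [Ne, ENNReal.ofReal_eq_zero, not_le]; linarith) (by simp)).2 h1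
    rw [ENNReal.toReal_ofReal hβ0.le] at h2
    have hq : (1 : ENNReal) / ENNReal.ofReal (1-α) = ENNReal.ofReal (1/(1-α)) := by
      rw [one_div, one_div, ← ENNReal.ofReal_inv_of_pos hβ0]
    rw [hq] at h2
    refine MemLp.ae_eq ?_ h2
    filter_upwards [hae] with u hu
    rw [Real.norm_of_nonneg (Real.rpow_nonneg hu.1.le _)]
  have hpq : Real.HolderConjugate (1/α) (1/(1-α)) := by
    rw [Real.holderConjugate_iff]
    constructor
    · exact one_lt_one_div hα0 hα1
    · rw [one_div, one_div, inv_inv, inv_inv]; ring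
  have hFnonneg : 0 ≤ᵐ[volume.restrict S] F := by
    filter_upwards [hae] with u hu
    exact Real.rpow_nonneg (hφnonneg u hu) _
  have hHnonneg : 0 ≤ᵐ[volume.restrict S] H := by
    filter_upwards [hae] with u hu
    exact Real.rpow_nonneg (Real.rpow_nonneg hu.1.le _) _
  have hHolder := integral_mul_le_Lp_mul_Lq_of_nonneg hpq hFnonneg hHnonneg hFmem hHmem
  rw [one_div_one_div, one_div_one_div] at hHolder
  have e1 : ∫ u in S, (G' u + 1/(2*u)) ^ α = ∫ u in S, F u * H u := by
    refine setIntegral_congr_fun measurableSet_Ioc fun u hu => ?_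
    have hu0 : 0 < u := hu.1
    have hf0 : 0 ≤ G' u + 1/(2*u) := hpos u hu
    simp only [hF, hH, hφ]
    rw [Real.mul_rpow (Real.rpow_nonneg hu0.le _) hf0,
      ← Real.rpow_mul hu0.le, ← Real.rpow_mul hu0.le, mul_right_comm,
      ← Real.rpow_add hu0]
    rw [show (1-α)*α + -α*(1-α) = 0 by ring, Real.rpow_zero, one_mul]
  have e2 : ∫ u in S, (F u) ^ (1/α) = ∫ u in S, φ u := by
    refine setIntegral_congr_fun measurableSet_Ioc fun u hu => ?_
    simp only [hF]
    rw [← Real.rpow_mul (hφnonneg u hu), mul_one_div_cancel (ne_of_gt hα0), Real.rpow_one]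
  have e3 : ∫ u in S, (H u) ^ (1/(1-α)) = ∫ u in S, u ^ (-α) := by
    refine setIntegral_congr_fun measurableSet_Ioc fun u hu => ?_
    simp only [hH]
    rw [← Real.rpow_mul (Real.rpow_nonneg hu.1.le _), mul_one_div_cancel (ne_of_gt hβ0),
      Real.rpow_one]
  rw [e2, e3, hBval] at hHolder
  have key : ∫ u in S, (G' u + 1/(2*u)) ^ α
      ≤ (∫ u in S, φ u) ^ α * (t ^ (1-α) / (1-α)) ^ (1-α) := by
    rw [e1]; exact hHolder
  -- final arithmetic
  have hT : 0 < t ^ (1-α) := Real.rpow_pos_of_pos ht _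
  have hGt : 0 ≤ G t := hGnonneg t ⟨ht, le_refl t⟩
  set C : ℝ := G t + 1/(2*(1-α)) with hC
  have hC0 : 0 ≤ C := by positivity
  have hA0 : 0 ≤ ∫ u in S, φ u := setIntegral_nonneg measurableSet_Ioc hφnonneg
  have hAC : ∫ u in S, φ u ≤ t ^ (1-α) * C := by
    have h5 : t ^ (1-α) * C = t ^ (1-α) * G t + t ^ (1-α) / (1-α) / 2 := by
      rw [hC]; field_simp
    rw [h5]; exact hAle
  have hD : t ^ (1-α) / (1-α) = t ^ (1-α) * (1/(1-α)) := by rw [mul_one_div]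
  have step1 : (∫ u in S, φ u) ^ α * (t ^ (1-α) / (1-α)) ^ (1-α)
      ≤ (t ^ (1-α) * C) ^ α * (t ^ (1-α) * (1/(1-α))) ^ (1-α) := by
    rw [hD]
    exact mul_le_mul_of_nonneg_right (Real.rpow_le_rpow hA0 hAC hα0.le)
      (Real.rpow_nonneg (by positivity) _)
  have step2 : (t ^ (1-α) * C) ^ α * (t ^ (1-α) * (1/(1-α))) ^ (1-α)
      = t ^ (1-α) * (C ^ α * (1/(1-α)) ^ (1-α)) := by
    rw [Real.mul_rpow hT.le hC0, Real.mul_rpow hT.le (by positivity)]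
    rw [show (t ^ (1-α)) ^ α * C ^ α * ((t ^ (1-α)) ^ (1-α) * (1/(1-α)) ^ (1-α))
      = ((t ^ (1-α)) ^ α * (t ^ (1-α)) ^ (1-α)) * (C ^ α * (1/(1-α)) ^ (1-α)) from by ring]
    rw [← Real.rpow_add hT, show α + (1-α) = 1 by ring, Real.rpow_one]
  have step3 : C ^ α * (1/(1-α)) ^ (1-α) ≤ α*C + (1-α)*(1/(1-α)) :=
    Real.geom_mean_le_arith_mean2_weighted hα0.le hβ0.le hC0 (by positivity) (by ring)
  have step4 : α*C + (1-α)*(1/(1-α)) ≤ 3*(ε⁻¹ + G t) := by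
    have h1 : (1-α)*(1/(1-α)) = 1 := by field_simp
    have h2 : 1/(2*(1-α)) = (1+ε)/ε := by
      rw [hβval]; field_simp
    have hCval : C = G t + (1+ε)/ε := by rw [hC, h2]
    have hαC : α * C ≤ C := by nlinarith
    have h3 : (1+ε)/ε + 1 ≤ 3*ε⁻¹ := by
      rw [show (3:ℝ)*ε⁻¹ = 3/ε from by rw [div_eq_mul_inv],
        show (1+ε)/ε + 1 = (1+2*ε)/ε from by field_simp; ring]
      gcongr <;> linarith
    rw [h1]
    have : α * C ≤ G t + (1+ε)/ε := by rw [← hCval]; exact hαC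
    linarith
  calc ∫ u in S, (G' u + 1/(2*u)) ^ α
      ≤ (∫ u in S, φ u) ^ α * (t ^ (1-α) / (1-α)) ^ (1-α) := key
    _ ≤ (t ^ (1-α) * C) ^ α * (t ^ (1-α) * (1/(1-α))) ^ (1-α) := step1
    _ = t ^ (1-α) * (C ^ α * (1/(1-α)) ^ (1-α)) := step2
    _ ≤ t ^ (1-α) * (α*C + (1-α)*(1/(1-α))) := mul_le_mul_of_nonneg_left step3 hT.le
    _ ≤ t ^ (1-α) * (3*(ε⁻¹ + G t)) := mul_le_mul_of_nonneg_left step4 hT.le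
    _ = 3 * t ^ (1-α) * (ε⁻¹ + G t) := by ring
end
end

section
/- Let (Ω, F, π) be a probability space equipped with a ℤ^d-action by invertible measure-preserving transformations τ_z. Let v_k : Ω → ℝ (k ∈ E) be bounded measurable functions satisfying, for π-a.e. ω: v_k(ω) = −v_{−k}(τ_k ω) for all k ∈ E, and ∑_{k∈E} v_k(ω) = 0. Define A : L²(Ω, π) → L²(Ω, π) by (Af)(ω) := ∑_{k∈E} v_k(ω)(f(τ_k ω) − f(ω)). Then A is skew-symmetric: ∫_Ω (Af) g dπ = −∫_Ω f (Ag) dπ for all f, g ∈ L²(Ω, π). -/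
open MeasureTheory Filter Finset

noncomputable section

lemma memLp_integrable_mul {α : Type*} [MeasurableSpace α] {μ : Measure α} {f g : α → ℝ}
    (hf : MemLp f 2 μ) (hg : MemLp g 2 μ) : Integrable (fun x => f x * g x) μ :=
  memLp_one_iff_integrable.mp <| hg.smul hf (r := 1)

/-- **Skew-symmetry of the drift part of the generator (commutation relation (3.9)).**
If the bounded measurable functions `v_k` are skew-symmetric and divergence-free, then the
operator `(Af)(ω) = ∑_{k ∈ E} v_k(ω) (f(τ_k ω) - f(ω))` is skew-symmetric on `L²(Ω, π)`:
`∫ (Af) g dπ = -∫ f (Ag) dπ`. -/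
theorem drift_operator_skew_symmetric
    {d : ℕ} {Ω : Type*} [MeasurableSpace Ω] (π : Measure Ω) [IsProbabilityMeasure π]
    (τ : (Fin d → ℤ) → Ω → Ω)
    (hτmeas : ∀ z, Measurable (τ z))
    (hτmp : ∀ z, MeasurePreserving (τ z) π π)
    (hτzero : τ 0 = id)
    (hτadd : ∀ z w, τ (z + w) = τ z ∘ τ w)
    (v : (Fin d → ℤ) → Ω → ℝ)
    (hvmeas : ∀ k ∈ unitVecs d, Measurable (v k))
    (hvbdd : ∃ B : ℝ, ∀ k ∈ unitVecs d, ∀ ω, |v k ω| ≤ B)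
    (hvskew : ∀ k ∈ unitVecs d, ∀ᵐ ω ∂π, v k ω = -v (-k) (τ k ω))
    (hvdiv : ∀ᵐ ω ∂π, ∑ k ∈ unitVecs d, v k ω = 0)
    (f g : Ω → ℝ) (hf : MemLp f 2 π) (hg : MemLp g 2 π) :
    ∫ ω, (∑ k ∈ unitVecs d, v k ω * (f (τ k ω) - f ω)) * g ω ∂π =
      -∫ ω, f ω * (∑ k ∈ unitVecs d, v k ω * (g (τ k ω) - g ω)) ∂π := by
  classical
  obtain ⟨B, hB⟩ := hvbdd
  -- inverse identities
  have hinv : ∀ z : Fin d → ℤ, ∀ ω, τ z (τ (-z) ω) = ω := by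
    intro z ω
    have h := congrFun (hτadd z (-z)).symm ω
    simpa [hτzero] using h
  -- measurable embeddings
  have hemb : ∀ z : Fin d → ℤ, MeasurableEmbedding (τ z) := by
    intro z
    exact MeasurableEquiv.measurableEmbedding
      { toFun := τ z
        invFun := τ (-z)
        left_inv := fun ω => by simpa using hinv (-z) ω
        right_inv := fun ω => hinv z ω
        measurable_toFun := hτmeas z
        measurable_invFun := hτmeas (-z) }
  -- integrability of the summands
  have hfk : ∀ z, MemLp (fun ω => f (τ z ω)) 2 π := fun z =>
    hf.comp_measurePreserving (hτmp z)
  have hgk : ∀ z, MemLp (fun ω => g (τ z ω)) 2 π := fun z =>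
    hg.comp_measurePreserving (hτmp z)
  have hI1 : ∀ k ∈ unitVecs d, Integrable (fun ω => v k ω * (f (τ k ω) * g ω)) π := by
    intro k hk
    exact (memLp_integrable_mul (hfk k) hg).bdd_mul (c := B)
      ((hvmeas k hk).aestronglyMeasurable)
      (Eventually.of_forall fun ω => by simpa [Real.norm_eq_abs] using hB k hk ω)
  have hI2 : ∀ k ∈ unitVecs d, Integrable (fun ω => v k ω * (f ω * g (τ k ω))) π := by
    intro k hk
    exact (memLp_integrable_mul hf (hgk k)).bdd_mul (c := B)
      ((hvmeas k hk).aestronglyMeasurable)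
      (Eventually.of_forall fun ω => by simpa [Real.norm_eq_abs] using hB k hk ω)
  -- rewrite the LHS as a sum of integrals
  have hL : ∫ ω, (∑ k ∈ unitVecs d, v k ω * (f (τ k ω) - f ω)) * g ω ∂π =
      ∑ k ∈ unitVecs d, ∫ ω, v k ω * (f (τ k ω) * g ω) ∂π := by
    have hae : ∀ᵐ ω ∂π, (∑ k ∈ unitVecs d, v k ω * (f (τ k ω) - f ω)) * g ω =
        ∑ k ∈ unitVecs d, v k ω * (f (τ k ω) * g ω) := by
      filter_upwards [hvdiv] with ω h0
      have h1 : ∑ k ∈ unitVecs d, v k ω * (f (τ k ω) - f ω) * g ω =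
          ∑ k ∈ unitVecs d, (v k ω * (f (τ k ω) * g ω) - v k ω * (f ω * g ω)) :=
        Finset.sum_congr rfl fun k _ => by ring
      rw [Finset.sum_mul, h1, Finset.sum_sub_distrib, ← Finset.sum_mul, h0, zero_mul, sub_zero]
    rw [integral_congr_ae hae, integral_finset_sum _ hI1]
  -- rewrite the RHS integral as a sum of integrals
  have hR : ∫ ω, f ω * (∑ k ∈ unitVecs d, v k ω * (g (τ k ω) - g ω)) ∂π =
      ∑ k ∈ unitVecs d, ∫ ω, v k ω * (f ω * g (τ k ω)) ∂π := by
    have hae : ∀ᵐ ω ∂π, f ω * (∑ k ∈ unitVecs d, v k ω * (g (τ k ω) - g ω)) =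
        ∑ k ∈ unitVecs d, v k ω * (f ω * g (τ k ω)) := by
      filter_upwards [hvdiv] with ω h0
      have h1 : ∑ k ∈ unitVecs d, f ω * (v k ω * (g (τ k ω) - g ω)) =
          ∑ k ∈ unitVecs d, (v k ω * (f ω * g (τ k ω)) - v k ω * (f ω * g ω)) :=
        Finset.sum_congr rfl fun k _ => by ring
      rw [Finset.mul_sum, h1, Finset.sum_sub_distrib, ← Finset.sum_mul, h0, zero_mul, sub_zero]
    rw [integral_congr_ae hae, integral_finset_sum _ hI2]
  -- per-k identity
  have hkey : ∀ k ∈ unitVecs d, ∫ ω, v k ω * (f (τ k ω) * g ω) ∂π =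
      -∫ ω, v (-k) ω * (f ω * g (τ (-k) ω)) ∂π := by
    intro k hk
    have hcv : ∫ ω, v k ω * (f (τ k ω) * g ω) ∂π =
        ∫ ω, v k (τ (-k) ω) * (f ω * g (τ (-k) ω)) ∂π := by
      rw [← MeasurePreserving.integral_comp (hτmp (-k)) (hemb (-k))
        (fun ω => v k ω * (f (τ k ω) * g ω))]
      refine integral_congr_ae (Eventually.of_forall fun ω => ?_)
      simp only [hinv k ω]
    have hskew : ∀ᵐ ω ∂π, v (-k) ω = -v k (τ (-k) ω) := by
      filter_upwards [hvskew (-k) (neg_mem_unitVecs hk)] with ω h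
      simpa using h
    have : ∫ ω, v k (τ (-k) ω) * (f ω * g (τ (-k) ω)) ∂π =
        ∫ ω, -(v (-k) ω * (f ω * g (τ (-k) ω))) ∂π := by
      apply integral_congr_ae
      filter_upwards [hskew] with ω h
      rw [h]; ring
    rw [hcv, this, integral_neg]
  -- sum up using the negation bijection on unitVecs
  rw [hL, hR]
  have : ∑ k ∈ unitVecs d, ∫ ω, v k ω * (f (τ k ω) * g ω) ∂π =
      ∑ k ∈ unitVecs d, -∫ ω, v (-k) ω * (f ω * g (τ (-k) ω)) ∂π :=
    Finset.sum_congr rfl hkey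
  rw [this, ← Finset.sum_neg_distrib]
  refine Finset.sum_equiv (Equiv.neg _) (fun k => ?_) (fun k hk => rfl)
  constructor
  · exact fun h => neg_mem_unitVecs h
  · intro h
    simpa using neg_mem_unitVecs h
end
end
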